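/- The von Neumann entropy of the partial trace of a pure state vanishes if and only if the pure state is a product vector: for a unit vector ψ ∈ H₁ ⊗ H₂, S(Tr₂ |ψ⟩⟨ψ|) = 0 if and only if ψ = φ₁ ⊗ φ₂ for unit vectors φᵢ ∈ Hᵢ. -/

import Mathlib

open Matrix ComplexOrder

variable {k l : ℕ}

/-- Partial trace over the second factor. -/
noncomputable def trSnd (ρ : Matrix (Fin k × Fin l) (Fin k × Fin l) ℂ) :
    Matrix (Fin k) (Fin k) ℂ :=
  Matrix.of fun i j => ∑ s : Fin l, ρ (i, s) (j, s)

/-- Von Neumann entropy `S(σ) = -Tr σ log σ`, expressed via eigenvalues. -/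
noncomputable def vNEntropy {n : Type*} [Fintype n] [DecidableEq n]
    (σ : Matrix n n ℂ) : ℝ :=
  if h : σ.IsHermitian then -∑ i, h.eigenvalues i * Real.log (h.eigenvalues i) else 0

/- ### Auxiliary lemmas -/

lemma aux_mul_star (a : ℂ) : a * star a = (‖a‖ : ℂ) ^ 2 := by
  exact_mod_cast Complex.mul_conj' a

lemma trSnd_apply (ψ : Fin k × Fin l → ℂ) (i j : Fin k) :
    trSnd (Matrix.vecMulVec ψ (star ψ)) i j = ∑ s, ψ (i, s) * star (ψ (j, s)) := by
  simp [trSnd, Matrix.vecMulVec_apply]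

lemma sigma_eq (ψ : Fin k × Fin l → ℂ) :
    trSnd (Matrix.vecMulVec ψ (star ψ)) =
      (Matrix.of fun i s => ψ (i, s)) * (Matrix.of fun (i : Fin k) (s : Fin l) => ψ (i, s))ᴴ := by
  ext i j
  simp [trSnd, Matrix.vecMulVec_apply, Matrix.mul_apply]

lemma sigma_posSemidef (ψ : Fin k × Fin l → ℂ) :
    (trSnd (Matrix.vecMulVec ψ (star ψ))).PosSemidef := by
  rw [sigma_eq]
  exact Matrix.posSemidef_self_mul_conjTranspose _

lemma sigma_trace (ψ : Fin k × Fin l → ℂ) (hψ : ∑ z, ‖ψ z‖ ^ 2 = 1) :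
    (trSnd (Matrix.vecMulVec ψ (star ψ))).trace = 1 := by
  have h1 : (trSnd (Matrix.vecMulVec ψ (star ψ))).trace
      = ∑ z : Fin k × Fin l, ((‖ψ z‖ : ℂ) ^ 2) := by
    rw [Fintype.sum_prod_type]
    simp only [Matrix.trace, Matrix.diag, trSnd, Matrix.of_apply, Matrix.vecMulVec_apply,
      Pi.star_apply, aux_mul_star]
  rw [h1]
  exact_mod_cast congrArg (Complex.ofReal) hψ

lemma sum_eigenvalues_eq_trace {n : ℕ} (A : Matrix (Fin n) (Fin n) ℂ) (hA : A.IsHermitian) :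
    ((∑ i, hA.eigenvalues i : ℝ) : ℂ) = A.trace := by
  conv_rhs => rw [hA.spectral_theorem, Unitary.conjStarAlgAut_apply]
  rw [Matrix.trace_mul_cycle,
    (Matrix.mem_unitaryGroup_iff').mp (Matrix.IsHermitian.eigenvectorUnitary hA).2,
    Matrix.one_mul, Matrix.trace_diagonal]
  push_cast
  rfl

lemma idem_eig {n : ℕ} {A : Matrix (Fin n) (Fin n) ℂ} (hA : A.IsHermitian)
    (hidem : A * A = A) (i : Fin n) :
    hA.eigenvalues i = 0 ∨ hA.eigenvalues i = 1 := by
  have hv := hA.mulVec_eigenvectorBasis i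
  set v := ⇑(hA.eigenvectorBasis i) with hvdef
  set μ := hA.eigenvalues i with hμdef
  have h2 : A *ᵥ (A *ᵥ v) = A *ᵥ v := by
    rw [Matrix.mulVec_mulVec, hidem]
  rw [hv, Matrix.mulVec_smul, hv, smul_smul] at h2
  have hvne : v ≠ 0 := by
    intro h0
    have := hA.eigenvectorBasis.orthonormal.ne_zero i
    apply this
    ext j
    exact congrFun h0 j
  have h3 : (μ * μ - μ) • v = 0 := by
    rw [sub_smul, h2, sub_self]
  rcases smul_eq_zero.mp h3 with h | h
  · have h' : μ * μ - μ = 0 := h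
    have hq : μ * (μ - 1) = 0 := by ring_nf; linarith
    rcases mul_eq_zero.mp hq with h'' | h''
    · exact Or.inl h''
    · exact Or.inr (by linarith)
  · exact absurd h hvne

lemma rank_one_decomp {n : ℕ} {A : Matrix (Fin n) (Fin n) ℂ} (hA : A.IsHermitian)
    (i₀ : Fin n) (h1 : hA.eigenvalues i₀ = 1)
    (h0 : ∀ m, m ≠ i₀ → hA.eigenvalues m = 0) (i j : Fin n) :
    A i j = hA.eigenvectorBasis i₀ i * star (hA.eigenvectorBasis i₀ j) := by
  conv_lhs => rw [hA.spectral_theorem, Unitary.conjStarAlgAut_apply, Matrix.mul_assoc, Matrix.mul_apply]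
  simp only [Matrix.star_eq_conjTranspose, Matrix.diagonal_mul, Matrix.conjTranspose_apply,
    Function.comp]
  rw [Finset.sum_eq_single i₀]
  · simp only [Matrix.IsHermitian.eigenvectorUnitary_apply, h1]
    norm_num
  · intro m _ hm
    simp [h0 m hm]
  · intro h; exact absurd (Finset.mem_univ i₀) h

/-- If all eigenvalues are 0 or 1, the entropy vanishes. -/
lemma entropy_of_eigs {n : ℕ} {A : Matrix (Fin n) (Fin n) ℂ} (hA : A.IsHermitian)
    (h01 : ∀ i, hA.eigenvalues i = 0 ∨ hA.eigenvalues i = 1) :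
    vNEntropy A = 0 := by
  rw [vNEntropy, dif_pos hA, neg_eq_zero]
  refine Finset.sum_eq_zero fun i _ => ?_
  rcases h01 i with h | h <;> simp [h]

/- ### The main theorem -/

/-- For a unit vector `ψ ∈ H₁ ⊗ H₂`, the entropy of the reduced density matrix
`Tr₂ |ψ⟩⟨ψ|` vanishes iff `ψ` is a product vector. -/
theorem entropy_zero_iff_product
    (ψ : Fin k × Fin l → ℂ) (hψ : ∑ z, ‖ψ z‖ ^ 2 = 1) :
    vNEntropy (trSnd (Matrix.vecMulVec ψ (star ψ))) = 0 ↔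
      ∃ (φ₁ : Fin k → ℂ) (φ₂ : Fin l → ℂ),
        (∑ i, ‖φ₁ i‖ ^ 2 = 1) ∧ (∑ s, ‖φ₂ s‖ ^ 2 = 1) ∧
        ψ = fun z => φ₁ z.1 * φ₂ z.2 := by
  set σ := trSnd (Matrix.vecMulVec ψ (star ψ)) with hσdef
  have hPSD : σ.PosSemidef := sigma_posSemidef ψ
  have hH : σ.IsHermitian := hPSD.1
  constructor
  · -- forward direction
    intro hent
    -- eigenvalue facts
    have hnn : ∀ m, 0 ≤ hH.eigenvalues m := hPSD.eigenvalues_nonneg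
    have hsum : ∑ m, hH.eigenvalues m = 1 := by
      have := sum_eigenvalues_eq_trace σ hH
      rw [sigma_trace ψ hψ] at this
      exact_mod_cast this
    have hle1 : ∀ m, hH.eigenvalues m ≤ 1 := by
      intro m
      rw [← hsum]
      exact Finset.single_le_sum (fun i _ => hnn i) (Finset.mem_univ m)
    have hterm : ∀ m, hH.eigenvalues m * Real.log (hH.eigenvalues m) = 0 := by
      have hsum0 : ∑ m, hH.eigenvalues m * Real.log (hH.eigenvalues m) = 0 := by
        rw [vNEntropy, dif_pos hH, neg_eq_zero] at hent
        exact hent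
      have hnonpos : ∀ m ∈ Finset.univ,
          hH.eigenvalues m * Real.log (hH.eigenvalues m) ≤ 0 :=
        fun m _ => mul_nonpos_of_nonneg_of_nonpos (hnn m)
          (Real.log_nonpos (hnn m) (hle1 m))
      intro m
      exact (Finset.sum_eq_zero_iff_of_nonpos hnonpos).mp hsum0 m (Finset.mem_univ m)
    have h01 : ∀ m, hH.eigenvalues m = 0 ∨ hH.eigenvalues m = 1 := by
      intro m
      rcases mul_eq_zero.mp (hterm m) with h | h
      · exact Or.inl h
      · rcases Real.log_eq_zero.mp h with h' | h' | h'
        · exact Or.inl h'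
        · exact Or.inr h'
        · exact absurd h' (by linarith [hnn m])
    -- find the unique eigenvalue 1
    have hex : ∃ i₀, hH.eigenvalues i₀ = 1 := by
      by_contra hno
      push_neg at hno
      have : ∑ m, hH.eigenvalues m = 0 := by
        refine Finset.sum_eq_zero fun m _ => ?_
        rcases h01 m with h | h
        · exact h
        · exact absurd h (hno m)
      rw [hsum] at this
      norm_num at this
    obtain ⟨i₀, hi₀⟩ := hex
    have hzero : ∀ m, m ≠ i₀ → hH.eigenvalues m = 0 := by
      intro m hm
      rcases h01 m with h | h
      · exact h
      · exfalso
        have hsub : hH.eigenvalues i₀ + hH.eigenvalues m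
            = ∑ x ∈ ({i₀, m} : Finset (Fin k)), hH.eigenvalues x := by
          rw [Finset.sum_pair (Ne.symm hm)]
        have hle : ∑ x ∈ ({i₀, m} : Finset (Fin k)), hH.eigenvalues x
            ≤ ∑ x, hH.eigenvalues x :=
          Finset.sum_le_sum_of_subset_of_nonneg (Finset.subset_univ _)
            (fun i _ _ => hnn i)
        rw [hsum, ← hsub, hi₀, h] at hle
        linarith
    -- the eigenvector
    set v : Fin k → ℂ := ⇑(hH.eigenvectorBasis i₀) with hvdef
    have hσv : ∀ i j, σ i j = v i * star (v j) := rank_one_decomp hH i₀ hi₀ hzero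
    have hσ_entry : ∀ i j, (∑ s, ψ (i, s) * star (ψ (j, s))) = v i * star (v j) := by
      intro i j
      rw [← trSnd_apply ψ i j]
      exact hσv i j
    -- v is a unit vector
    have hvnorm : ∑ i, ‖v i‖ ^ 2 = 1 := by
      have h1 : ‖hH.eigenvectorBasis i₀‖ = 1 :=
        hH.eigenvectorBasis.orthonormal.1 i₀
      rw [EuclideanSpace.norm_eq] at h1
      have := Real.sqrt_eq_one.mp h1
      simpa using this
    have hvC : ∑ i, v i * star (v i) = 1 := by
      have : ∑ i, ((‖v i‖ : ℂ)) ^ 2 = 1 := by exact_mod_cast congrArg Complex.ofReal hvnorm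
      simpa only [aux_mul_star] using this
    -- the second factor
    set c : Fin l → ℂ := fun s => ∑ i, star (v i) * ψ (i, s) with hcdef
    have hstarc : ∀ s, star (c s) = ∑ i, v i * star (ψ (i, s)) := by
      intro s
      simp only [hcdef, star_sum, star_mul', star_star]
    -- T = ∑ c s * star (c s) = 1
    have hT : ∑ s, c s * star (c s) = 1 := by
      calc ∑ s, c s * star (c s)
          = ∑ s, ∑ i, ∑ j, (star (v i) * ψ (i, s)) * (v j * star (ψ (j, s))) := by
            refine Finset.sum_congr rfl fun s _ => ?_
            rw [hstarc s, hcdef, Finset.sum_mul_sum]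
        _ = ∑ i, ∑ j, (star (v i) * v j) * ∑ s, ψ (i, s) * star (ψ (j, s)) := by
            rw [Finset.sum_comm]
            refine Finset.sum_congr rfl fun i _ => ?_
            rw [Finset.sum_comm]
            refine Finset.sum_congr rfl fun j _ => ?_
            rw [Finset.mul_sum]
            exact Finset.sum_congr rfl fun s _ => by ring
        _ = ∑ i, ∑ j, (star (v i) * v i) * (v j * star (v j)) := by
            refine Finset.sum_congr rfl fun i _ => Finset.sum_congr rfl fun j _ => ?_
            rw [hσ_entry i j]; ring
        _ = (∑ i, star (v i) * v i) * (∑ j, v j * star (v j)) := by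
            rw [Finset.sum_mul_sum]
        _ = 1 := by
            rw [hvC]
            rw [show (∑ i, star (v i) * v i) = ∑ i, v i * star (v i) from
              Finset.sum_congr rfl fun i _ => mul_comm _ _, hvC, one_mul]
    -- ∑ ‖ψ z - v z.1 * c z.2‖² = 0
    have hS1 : ∑ z : Fin k × Fin l, ψ z * star (ψ z) = 1 := by
      have : ∑ z : Fin k × Fin l, ((‖ψ z‖ : ℂ)) ^ 2 = 1 := by
        exact_mod_cast congrArg Complex.ofReal hψ
      simpa only [aux_mul_star] using this
    have hS2 : ∑ z : Fin k × Fin l, ψ z * star (v z.1) * star (c z.2) = 1 := by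
      rw [Fintype.sum_prod_type_right]
      calc ∑ s, ∑ i, ψ (i, s) * star (v i) * star (c s)
          = ∑ s, star (c s) * c s := by
            refine Finset.sum_congr rfl fun s _ => ?_
            rw [hcdef, Finset.mul_sum]
            exact Finset.sum_congr rfl fun i _ => by ring
        _ = 1 := by rw [← hT]; exact Finset.sum_congr rfl fun s _ => mul_comm _ _
    have hS3 : ∑ z : Fin k × Fin l, v z.1 * c z.2 * star (ψ z) = 1 := by
      rw [Fintype.sum_prod_type_right]
      calc ∑ s, ∑ i, v i * c s * star (ψ (i, s))
          = ∑ s, c s * star (c s) := by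
            refine Finset.sum_congr rfl fun s _ => ?_
            rw [hstarc s, Finset.mul_sum]
            exact Finset.sum_congr rfl fun i _ => by ring
        _ = 1 := hT
    have hS4 : ∑ z : Fin k × Fin l, (v z.1 * star (v z.1)) * (c z.2 * star (c z.2)) = 1 := by
      rw [Fintype.sum_prod_type]
      calc ∑ i, ∑ s, (v i * star (v i)) * (c s * star (c s))
          = ∑ i, (v i * star (v i)) * ∑ s, c s * star (c s) := by
            exact Finset.sum_congr rfl fun i _ => (Finset.mul_sum _ _ _).symm
        _ = 1 := by
            rw [hT]
            simpa using hvC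
    have hkeyC : ∑ z : Fin k × Fin l,
        (ψ z - v z.1 * c z.2) * star (ψ z - v z.1 * c z.2) = 0 := by
      have expand : ∀ z : Fin k × Fin l,
          (ψ z - v z.1 * c z.2) * star (ψ z - v z.1 * c z.2)
          = ψ z * star (ψ z) - ψ z * star (v z.1) * star (c z.2)
            - v z.1 * c z.2 * star (ψ z)
            + (v z.1 * star (v z.1)) * (c z.2 * star (c z.2)) := by
        intro z
        simp only [star_sub, star_mul']
        ring
      rw [Finset.sum_congr rfl fun z _ => expand z]
      rw [Finset.sum_add_distrib, Finset.sum_sub_distrib, Finset.sum_sub_distrib,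
        hS1, hS2, hS3, hS4]
      ring
    have hkey : ∀ z : Fin k × Fin l, ψ z = v z.1 * c z.2 := by
      have hre : ∑ z : Fin k × Fin l, ‖ψ z - v z.1 * c z.2‖ ^ 2 = 0 := by
        have : ∑ z : Fin k × Fin l, ((‖ψ z - v z.1 * c z.2‖ : ℂ)) ^ 2 = 0 := by
          rw [← hkeyC]
          exact Finset.sum_congr rfl fun z _ => (aux_mul_star _).symm
        exact_mod_cast this
      intro z
      have hz : ‖ψ z - v z.1 * c z.2‖ ^ 2 = 0 :=
        (Finset.sum_eq_zero_iff_of_nonneg (fun z _ => sq_nonneg _)).mp hre z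
          (Finset.mem_univ z)
      have : ψ z - v z.1 * c z.2 = 0 := by
        rwa [pow_eq_zero_iff (by norm_num), norm_eq_zero] at hz
      exact sub_eq_zero.mp this
    refine ⟨v, c, hvnorm, ?_, ?_⟩
    · -- ∑ ‖c s‖² = 1
      have : ∑ s, ((‖c s‖ : ℂ)) ^ 2 = 1 := by
        rw [← hT]
        exact Finset.sum_congr rfl fun s _ => (aux_mul_star _).symm
      exact_mod_cast this
    · funext z
      exact hkey z
  · -- backward direction
    rintro ⟨φ₁, φ₂, h1, h2, rfl⟩
    have hφ₁C : ∑ i, φ₁ i * star (φ₁ i) = 1 := by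
      have : ∑ i, ((‖φ₁ i‖ : ℂ)) ^ 2 = 1 := by exact_mod_cast congrArg Complex.ofReal h1
      simpa only [aux_mul_star] using this
    have hφ₂C : ∑ s, φ₂ s * star (φ₂ s) = 1 := by
      have : ∑ s, ((‖φ₂ s‖ : ℂ)) ^ 2 = 1 := by exact_mod_cast congrArg Complex.ofReal h2
      simpa only [aux_mul_star] using this
    have hentry : ∀ i j, σ i j = φ₁ i * star (φ₁ j) := by
      intro i j
      rw [hσdef, trSnd_apply]
      calc ∑ s, (φ₁ i * φ₂ s) * star (φ₁ j * φ₂ s)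
          = ∑ s, (φ₁ i * star (φ₁ j)) * (φ₂ s * star (φ₂ s)) := by
            refine Finset.sum_congr rfl fun s _ => ?_
            simp only [star_mul']
            ring
        _ = φ₁ i * star (φ₁ j) := by
            rw [← Finset.mul_sum, hφ₂C, mul_one]
    have hidem : σ * σ = σ := by
      ext i j
      rw [Matrix.mul_apply]
      calc ∑ m, σ i m * σ m j
          = ∑ m, (φ₁ i * star (φ₁ j)) * (φ₁ m * star (φ₁ m)) := by
            refine Finset.sum_congr rfl fun m _ => ?_
            rw [hentry i m, hentry m j]
            ring
        _ = φ₁ i * star (φ₁ j) := by rw [← Finset.mul_sum, hφ₁C, mul_one]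
        _ = σ i j := (hentry i j).symm
    exact entropy_of_eigs hH (idem_eig hH hidem)
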